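/- Let (b̂_p)_{p∈P} be a finite family of random variables indexed by a product path space P = ∏_{j=1}^J {1,...,r_j} with r_j ≥ 2, each with unit variance, and suppose the correlation between b̂_p and b̂_q equals ρ^{d(p,q)} where d is the Hamming distance and 0 ≤ ρ < 1. Then the average of all pairwise correlations, |P|^{-2} ∑_{p,q} ρ^{d(p,q)}, equals ∏_{j=1}^J (1 + ρ(r_j - 1))/r_j, which converges to 0 as J → ∞. -/

import Mathlib

open Finset MeasureTheory

/-- For unit-variance random variables `b̂_p` indexed by the path space
`∏_{j<J} {1,…,r_j}` with correlations `ρ^{d(p,q)}` (`d` the Hamming distance),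
the average of all pairwise correlations equals `∏_j (1 + ρ(r_j-1))/r_j`,
which converges to 0 as `J → ∞`. -/
theorem stmt15 {Ω : Type*} [MeasurableSpace Ω] (μ : Measure Ω) [IsProbabilityMeasure μ]
    (ρ : ℝ) (hρ0 : 0 ≤ ρ) (hρ1 : ρ < 1) (r : ℕ → ℕ) (hr : ∀ j, 2 ≤ r j)
    (b : (J : ℕ) → ((j : Fin J) → Fin (r j)) → Ω → ℝ)
    (hvar : ∀ J p, ∫ x, (b J p x) ^ 2 ∂μ - (∫ x, b J p x ∂μ) ^ 2 = 1)
    (hcov : ∀ J (p q : (j : Fin J) → Fin (r j)),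
      ∫ x, b J p x * b J q x ∂μ - (∫ x, b J p x ∂μ) * (∫ x, b J q x ∂μ) =
        ρ ^ (Finset.univ.filter (fun j => p j ≠ q j)).card) :
    (∀ J : ℕ, ((∏ j : Fin J, (r j : ℝ))⁻¹) ^ 2 *
        ∑ p : (j : Fin J) → Fin (r j), ∑ q : (j : Fin J) → Fin (r j),
          (∫ x, b J p x * b J q x ∂μ - (∫ x, b J p x ∂μ) * (∫ x, b J q x ∂μ)) =
        ∏ j : Fin J, (1 + ρ * ((r j : ℝ) - 1)) / (r j)) ∧
    Filter.Tendsto (fun J : ℕ => ((∏ j : Fin J, (r j : ℝ))⁻¹) ^ 2 *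
        ∑ p : (j : Fin J) → Fin (r j), ∑ q : (j : Fin J) → Fin (r j),
          (∫ x, b J p x * b J q x ∂μ - (∫ x, b J p x ∂μ) * (∫ x, b J q x ∂μ)))
      Filter.atTop (nhds 0) := by
  have hrpos : ∀ j, (0:ℝ) < (r j : ℝ) := fun j => by
    have := hr j; exact_mod_cast Nat.lt_of_lt_of_le Nat.zero_lt_two this
  have key : ∀ J : ℕ, ((∏ j : Fin J, (r j : ℝ))⁻¹) ^ 2 *
        ∑ p : (j : Fin J) → Fin (r j), ∑ q : (j : Fin J) → Fin (r j),
          (∫ x, b J p x * b J q x ∂μ - (∫ x, b J p x ∂μ) * (∫ x, b J q x ∂μ)) =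
        ∏ j : Fin J, (1 + ρ * ((r j : ℝ) - 1)) / (r j) := by
    intro J
    have h1 : ∀ p q : (j : Fin J) → Fin (r j),
        (ρ : ℝ) ^ (Finset.univ.filter (fun j => p j ≠ q j)).card =
          ∏ j : Fin J, (if p j = q j then (1:ℝ) else ρ) := by
      intro p q
      rw [Finset.prod_ite, Finset.prod_const, Finset.prod_const, one_pow, one_mul]
    have hinner : ∀ (j : Fin J) (a : Fin (r j)),
        ∑ b : Fin (r j), (if a = b then (1:ℝ) else ρ) = 1 + ρ * ((r j : ℝ) - 1) := by
      intro j a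
      have h : ∀ b : Fin (r j), (if a = b then (1:ℝ) else ρ)
          = ρ + (if a = b then 1 - ρ else 0) := by
        intro b; split <;> ring
      simp_rw [h, Finset.sum_add_distrib, Finset.sum_const, Finset.sum_ite_eq,
        Finset.mem_univ, if_true, Finset.card_univ, Fintype.card_fin, nsmul_eq_mul]
      ring
    have hq : ∀ p : (j : Fin J) → Fin (r j),
        ∑ q : (j : Fin J) → Fin (r j), ∏ j : Fin J, (if p j = q j then (1:ℝ) else ρ)
          = ∏ j : Fin J, (1 + ρ * ((r j : ℝ) - 1)) := by
      intro p
      rw [← Fintype.prod_sum (fun (j : Fin J) (y : Fin (r j)) => if p j = y then (1:ℝ) else ρ)]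
      exact Finset.prod_congr rfl fun j _ => hinner j (p j)
    have hsum : ∑ p : (j : Fin J) → Fin (r j), ∑ q : (j : Fin J) → Fin (r j),
          (∫ x, b J p x * b J q x ∂μ - (∫ x, b J p x ∂μ) * (∫ x, b J q x ∂μ))
        = (∏ j : Fin J, (r j : ℝ)) * ∏ j : Fin J, (1 + ρ * ((r j : ℝ) - 1)) := by
      simp_rw [hcov, h1, hq, Finset.sum_const, Finset.card_univ, nsmul_eq_mul]
      congr 1
      rw [Fintype.card_pi]
      push_cast
      simp
    rw [hsum, Finset.prod_div_distrib]
    have hne : (∏ j : Fin J, (r j : ℝ)) ≠ 0 :=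
      Finset.prod_ne_zero_iff.2 fun j _ => (hrpos j).ne'
    field_simp
  refine ⟨key, ?_⟩
  have hhalf : 0 ≤ (1 + ρ) / 2 := by linarith
  have hhalf1 : (1 + ρ) / 2 < 1 := by linarith
  have hbound : ∀ J : ℕ, ∏ j : Fin J, (1 + ρ * ((r j : ℝ) - 1)) / (r j) ≤ ((1 + ρ) / 2) ^ J := by
    intro J
    calc ∏ j : Fin J, (1 + ρ * ((r j : ℝ) - 1)) / (r j)
        ≤ ∏ _j : Fin J, (1 + ρ) / 2 := by
          apply Finset.prod_le_prod
          · intro j _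
            have := hrpos j
            have h2 : (2:ℝ) ≤ (r j : ℝ) := by exact_mod_cast hr j
            apply div_nonneg _ this.le
            nlinarith
          · intro j _
            have h2 : (2:ℝ) ≤ (r j : ℝ) := by exact_mod_cast hr j
            rw [div_le_div_iff₀ (hrpos j) two_pos]
            nlinarith
      _ = ((1 + ρ) / 2) ^ J := by simp [div_pow]
  have hpos : ∀ J : ℕ, 0 ≤ ∏ j : Fin J, (1 + ρ * ((r j : ℝ) - 1)) / (r j) := by
    intro J
    apply Finset.prod_nonneg
    intro j _
    have h2 : (2:ℝ) ≤ (r j : ℝ) := by exact_mod_cast hr j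
    have := hrpos j
    apply div_nonneg <;> nlinarith
  have htend : Filter.Tendsto (fun J : ℕ => ((1 + ρ) / 2) ^ J) Filter.atTop (nhds 0) :=
    tendsto_pow_atTop_nhds_zero_of_lt_one hhalf hhalf1
  exact (squeeze_zero hpos hbound htend).congr fun J => (key J).symm
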